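/- Let M be a finite matroid with rank function r. A set C ⊆ E(M) is a circuit of M if and only if C is minimal with respect to inclusion among the sets D ⊆ E(M) for which there exists a cyclic flat X of M with D ⊆ X and |D| = r(X) + 1. -/

import Mathlib

namespace Matroid

variable {α β : Type*}

/-- A circuit of a matroid: a minimal dependent set. -/
def IsCircuit' (M : Matroid α) (C : Set α) : Prop :=
  M.Dep C ∧ ∀ D, D ⊂ C → M.Indep D

/-- A cyclic flat: a flat that is a (possibly empty) union of circuits. -/
def CyclicFlat (M : Matroid α) (X : Set α) : Prop :=
  M.IsFlat X ∧ ∀ e ∈ X, ∃ C, M.IsCircuit' C ∧ C ⊆ X ∧ e ∈ C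

/-- The rank of a set: the maximum size of an independent subset. -/
noncomputable def rk (M : Matroid α) (X : Set α) : ℕ :=
  sSup {n | ∃ I, M.Indep I ∧ I ⊆ X ∧ I.ncard = n}

/-- Deletion of a set from a matroid. -/
def del (M : Matroid α) (D : Set α) : Matroid α := M ↾ (M.E \ D)

/-- Contraction of a set in a matroid. -/
def con (M : Matroid α) (C : Set α) : Matroid α := (M✶ ↾ (M.E \ C))✶

/-- `N` is a minor of `M` if it is obtained from `M` by a contraction and a deletion. -/
def IsMinorOf (N M : Matroid α) : Prop := ∃ C D, N = (M.con C).del D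

/-- Matroid isomorphism: a bijection of ground sets preserving independence. -/
def IsIsoTo (M : Matroid α) (N : Matroid β) : Prop :=
  ∃ e : M.E ≃ N.E, ∀ I : Set M.E,
    M.Indep (Subtype.val '' I) ↔ N.Indep (Subtype.val '' (e '' I))

end Matroid

namespace Matroid

variable {α : Type*} {M : Matroid α} {I X C D : Set α}

lemma rk_eq_of_basis' [M.Finite] (hI : M.IsBasis' I X) : M.rk X = I.ncard := by
  have hgreat : IsGreatest {n | ∃ J, M.Indep J ∧ J ⊆ X ∧ J.ncard = n} I.ncard := by
    constructor
    · exact ⟨I, hI.indep, hI.subset, rfl⟩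
    · rintro n ⟨J, hJ, hJX, rfl⟩
      obtain ⟨J', hJ', hJJ'⟩ := hJ.subset_isBasis'_of_subset hJX
      have h1 : (M ↾ X).IsBase I := isBase_restrict_iff'.2 hI
      have h2 : (M ↾ X).IsBase J' := isBase_restrict_iff'.2 hJ'
      have hcard := h2.ncard_eq_ncard_of_isBase h1
      calc J.ncard ≤ J'.ncard :=
            Set.ncard_le_ncard hJJ' (M.set_finite J' hJ'.indep.subset_ground)
        _ = I.ncard := hcard
  exact hgreat.csSup_eq

lemma indep_ncard_le_rk [M.Finite] (hJ : M.Indep I) (hJX : I ⊆ X) : I.ncard ≤ M.rk X := by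
  obtain ⟨I', hI'⟩ := M.exists_isBasis' X
  rw [rk_eq_of_basis' hI']
  obtain ⟨J', hJ', hJJ'⟩ := hJ.subset_isBasis'_of_subset hJX
  have h1 : (M ↾ X).IsBase I' := isBase_restrict_iff'.2 hI'
  have h2 : (M ↾ X).IsBase J' := isBase_restrict_iff'.2 hJ'
  calc I.ncard ≤ J'.ncard :=
        Set.ncard_le_ncard hJJ' (M.set_finite J' hJ'.indep.subset_ground)
    _ = I'.ncard := h2.ncard_eq_ncard_of_isBase h1

lemma dep_of_ncard_rk [M.Finite] (hDX : D ⊆ X) (hXE : X ⊆ M.E)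
    (hcard : D.ncard = M.rk X + 1) : M.Dep D := by
  rw [dep_iff]
  refine ⟨fun hind ↦ ?_, hDX.trans hXE⟩
  have := indep_ncard_le_rk hind hDX
  omega

lemma exists_isCircuit_of_dep [M.Finite] (hD : M.Dep D) : ∃ C ⊆ D, M.IsCircuit' C := by
  obtain ⟨n, hn⟩ : ∃ n, D.ncard = n := ⟨_, rfl⟩
  induction n using Nat.strong_induction_on generalizing D with
  | _ n ih =>
    by_cases h : ∀ D' ⊂ D, M.Indep D'
    · exact ⟨D, Set.Subset.rfl, hD, h⟩
    · push_neg at h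
      obtain ⟨D', hss, hnind⟩ := h
      have hD' : M.Dep D' := dep_iff.2 ⟨hnind, hss.subset.trans hD.subset_ground⟩
      have hlt : D'.ncard < n := hn ▸ Set.ncard_lt_ncard hss (M.set_finite D hD.subset_ground)
      obtain ⟨C, hCD', hC⟩ := ih D'.ncard hlt hD' rfl
      exact ⟨C, hCD'.trans hss.subset, hC⟩

lemma flat_closure (M : Matroid α) (X : Set α) : M.IsFlat (M.closure X) := by
  exact isFlat_closure X

lemma IsCircuit'.closure_cyclicFlat [M.Finite] (hC : M.IsCircuit' C) :
    M.CyclicFlat (M.closure C) ∧ C.ncard = M.rk (M.closure C) + 1 := by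
  have hCE : C ⊆ M.E := hC.1.subset_ground
  have hCfin : C.Finite := M.set_finite C hCE
  have hCne : C.Nonempty := by
    rcases C.eq_empty_or_nonempty with rfl | h
    · exact absurd M.empty_indep hC.1.not_indep
    · exact h
  obtain ⟨f, hf⟩ := hCne
  set I := C \ {f} with hIdef
  have hIC : I ⊂ C := Set.sdiff_singleton_ssubset.2 hf
  have hIind : M.Indep I := hC.2 I hIC
  have hins : insert f I = C := by
    rw [hIdef, Set.insert_diff_singleton, Set.insert_eq_of_mem hf]
  have hfcl : f ∈ M.closure I := by
    have : M.Dep (insert f I) := hins ▸ hC.1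
    exact ((hIind.insert_dep_iff).1 this).1
  have hCcl : M.closure C = M.closure I := by
    refine subset_antisymm (M.closure_subset_closure_of_subset_closure ?_)
      (M.closure_subset_closure Set.diff_subset)
    intro x hx
    rcases eq_or_ne x f with rfl | hne
    · exact hfcl
    · exact M.mem_closure_of_mem (show x ∈ I from ⟨hx, hne⟩) hIind.subset_ground
  have hIbasis : M.IsBasis I (M.closure C) := hCcl ▸ hIind.isBasis_closure
  have hcard : C.ncard = M.rk (M.closure C) + 1 := by
    rw [rk_eq_of_basis' hIbasis.isBasis']
    exact (Set.ncard_diff_singleton_add_one hf hCfin).symm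
  refine ⟨⟨M.flat_closure C, fun e he ↦ ?_⟩, hcard⟩
  by_cases heC : e ∈ C
  · exact ⟨C, hC, M.subset_closure C hCE, heC⟩
  · have heI : e ∉ I := fun h ↦ heC h.1
    have hdep : M.Dep (insert e I) :=
      (hIind.insert_dep_iff).2 ⟨hCcl ▸ he, heI⟩
    obtain ⟨C', hC'sub, hC'⟩ := exists_isCircuit_of_dep hdep
    have hC'cl : C' ⊆ M.closure C := by
      refine hC'sub.trans (Set.insert_subset he ?_)
      exact (Set.diff_subset.trans (M.subset_closure C hCE))
    have heC' : e ∈ C' := by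
      by_contra heC'
      have : C' ⊆ I := fun x hx ↦ ((hC'sub hx).resolve_left (fun h ↦ heC' (h ▸ hx)))
      exact hC'.1.not_indep (hIind.subset this)
    exact ⟨C', hC', hC'cl, heC'⟩

end Matroid

/-- A set `C ⊆ E(M)` is a circuit of a finite matroid `M` iff `C` is minimal with respect to
inclusion among the sets `D ⊆ E(M)` for which there is a cyclic flat `X` with `D ⊆ X` and
`|D| = r X + 1`. -/
theorem isCircuit_iff_minimal {α : Type*} (M : Matroid α) [M.Finite]
    (C : Set α) (hC : C ⊆ M.E) :
    M.IsCircuit' C ↔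
      ((∃ X : Set α, M.CyclicFlat X ∧ C ⊆ X ∧ C.ncard = M.rk X + 1) ∧
        ∀ D ⊆ M.E, (∃ X : Set α, M.CyclicFlat X ∧ D ⊆ X ∧ D.ncard = M.rk X + 1) →
          D ⊆ C → D = C) := by
  constructor
  · intro hCirc
    refine ⟨⟨M.closure C, hCirc.closure_cyclicFlat.1, M.subset_closure C hC,
      hCirc.closure_cyclicFlat.2⟩, ?_⟩
    rintro D hDE ⟨X, hX, hDX, hcard⟩ hDC
    have hDdep : M.Dep D := M.dep_of_ncard_rk hDX hX.1.subset_ground hcard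
    by_contra hne
    exact hDdep.not_indep (hCirc.2 D (ssubset_of_subset_of_ne hDC hne))
  · rintro ⟨⟨X, hX, hCX, hcard⟩, hmin⟩
    have hCdep : M.Dep C := M.dep_of_ncard_rk hCX hX.1.subset_ground hcard
    obtain ⟨C', hC'C, hC'⟩ := M.exists_isCircuit_of_dep hCdep
    have hext := hC'.closure_cyclicFlat
    have : C' = C := hmin C' (hC'C.trans hC)
      ⟨M.closure C', hext.1, M.subset_closure C' hC'.1.subset_ground, hext.2⟩ hC'C
    exact this ▸ hC'
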